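/- Let i, j > 0 with i + j = 1 and let ψ : ℕ → ℝ be strictly positive, non-increasing, with ψ(r) ≤ 2^{−1/max{i,j}}/2 for all r. For nonzero integers q, let R_ψ(q) ⊆ [0,1]² (torus) denote the rectangle of points γ with ‖q x₁ − γ₁‖ ≤ ψ(|q|)^i and ‖q x₂ − γ₂‖ ≤ ψ(|q|)^j, and let R_{2ψ}(q) be the analogous rectangle with ψ replaced by 2ψ. Then for any finite index set Q of nonzero integers, μ(⋃_{q∈Q} R_{2ψ}(q)) ≤ 2 μ(⋃_{q∈Q} R_ψ(q)). -/

import Mathlib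

open MeasureTheory Set Filter

/-- Distance to the nearest integer. -/
noncomputable def nint (y : ℝ) : ℝ := |y - (round y : ℝ)|

/-- `pw y e = y ^ (1/e)`, with the convention that `y ^ (1/0) = 0`. -/
noncomputable def pw (y e : ℝ) : ℝ := if e = 0 then 0 else y ^ (1 / e)

/-- A vector is irrational if `1, x₁, x₂` are linearly independent over `ℚ`. -/
def IrrVec (x : ℝ × ℝ) : Prop :=
  ∀ a b c : ℤ, (a : ℝ) * x.1 + (b : ℝ) * x.2 + (c : ℝ) = 0 → a = 0 ∧ b = 0 ∧ c = 0

/-- The set `Bad(i,j)` of `(i,j)`-badly approximable vectors. -/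
def Badij (i j : ℝ) (x : ℝ × ℝ) : Prop :=
  IrrVec x ∧ ∃ c > (0 : ℝ), ∀ q : ℕ, 0 < q →
    max (pw (nint (q * x.1)) i) (pw (nint (q * x.2)) j) > c / q

/-- The twisted well-approximable set `W^x_{(i,j)}(ψ)`. -/
def twistedW (x : ℝ × ℝ) (i j : ℝ) (ψ : ℕ → ℝ) : Set (ℝ × ℝ) :=
  {γ ∈ Set.Icc (0 : ℝ × ℝ) 1 |
    {q : ℤ | q ≠ 0 ∧
      max (pw (nint (q * x.1 - γ.1)) i) (pw (nint (q * x.2 - γ.2)) j)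
        ≤ ψ q.natAbs}.Infinite}

/-- The rectangle `R_ψ(q)` of sidelengths `2ψ(|q|)^i`, `2ψ(|q|)^j` centred at `q x` mod 1,
viewed inside the unit square. -/
def rect (x : ℝ × ℝ) (i j : ℝ) (ψ : ℕ → ℝ) (q : ℤ) : Set (ℝ × ℝ) :=
  {γ ∈ Set.Icc (0 : ℝ × ℝ) 1 |
    nint (q * x.1 - γ.1) ≤ ψ q.natAbs ^ i ∧ nint (q * x.2 - γ.2) ≤ ψ q.natAbs ^ j}


lemma nint_nonneg (y : ℝ) : 0 ≤ nint y := abs_nonneg _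

lemma nint_le_half (y : ℝ) : nint y ≤ 1/2 := abs_sub_round y

lemma nint_add_int (y : ℝ) (n : ℤ) : nint (y + n) = nint y := by
  unfold nint
  rw [round_add_intCast]
  push_cast
  ring_nf

lemma nint_le_abs (y : ℝ) : nint y ≤ |y| := by
  rcases eq_or_ne (round y) 0 with h | h
  · unfold nint; rw [h]; simp
  · have h1 : nint y ≤ 1/2 := nint_le_half y
    have h2 : (1 : ℝ) ≤ |(round y : ℝ)| := by
      rw [← Int.cast_abs]
      exact_mod_cast Int.one_le_abs h
    have h3 : |(round y : ℝ)| ≤ |y| + |y - round y| := by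
      calc |(round y : ℝ)| = |y + ((round y : ℝ) - y)| := by ring_nf
        _ ≤ |y| + |(round y : ℝ) - y| := abs_add_le _ _
        _ = |y| + |y - round y| := by rw [abs_sub_comm]
    unfold nint at *
    linarith

lemma nint_le_int (y : ℝ) (n : ℤ) : nint y ≤ |y - n| := by
  have h := nint_le_abs (y - n)
  have h2 : nint (y - n + n) = nint (y - n) := nint_add_int (y - n) n
  rw [sub_add_cancel] at h2
  rw [h2]; exact h

lemma nint_triangle (a b : ℝ) : nint (a + b) ≤ nint a + nint b := by
  have h := nint_le_int (a + b) (round a + round b)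
  have h2 : |a + b - ((round a + round b : ℤ) : ℝ)| ≤ nint a + nint b := by
    unfold nint
    push_cast
    calc |a + b - ((round a : ℝ) + (round b : ℝ))|
        = |(a - round a) + (b - round b)| := by ring_nf
      _ ≤ |a - (round a : ℝ)| + |b - (round b : ℝ)| := abs_add_le _ _
  exact le_trans h h2

lemma nint_eq_abs {y : ℝ} (h : |y| ≤ 1/2) : nint y = |y| := by
  rcases eq_or_ne (round y) 0 with h0 | h0
  · unfold nint; rw [h0]; simp
  · have h1 : (1 : ℝ) ≤ |(round y : ℝ)| := by
      rw [← Int.cast_abs]; exact_mod_cast Int.one_le_abs h0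
    have h2 : |y| ≤ nint y := by
      have h3 : |(round y : ℝ)| ≤ |y - round y| + |y| := by
        calc |(round y : ℝ)| = |-(y - (round y : ℝ)) + y| := by ring_nf
          _ ≤ |-(y - (round y : ℝ))| + |y| := abs_add_le _ _
          _ = |y - (round y : ℝ)| + |y| := by rw [abs_neg]
      unfold nint at *; linarith
    exact le_antisymm (nint_le_abs y) h2

lemma nint_eq_fract (y : ℝ) : nint y = |Int.fract (y + 1/2) - 1/2| := by
  have h1 : y = (Int.fract (y + 1/2) - 1/2) + (⌊y + 1/2⌋ : ℤ) := by
    have h := Int.fract_add_floor (y + 1/2)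
    push_cast
    linarith
  have h2 : |Int.fract (y + 1/2) - 1/2| ≤ 1/2 := by
    have := Int.fract_nonneg (y + 1/2)
    have := Int.fract_lt_one (y + 1/2)
    rw [abs_le]; constructor <;> linarith
  calc nint y = nint ((Int.fract (y + 1/2) - 1/2) + (⌊y + 1/2⌋ : ℤ)) := by rw [← h1]
    _ = nint (Int.fract (y + 1/2) - 1/2) := nint_add_int _ _
    _ = |Int.fract (y + 1/2) - 1/2| := nint_eq_abs h2

lemma measurable_nint : Measurable nint := by
  have : nint = fun y => |Int.fract (y + 1/2) - 1/2| := funext nint_eq_fract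
  rw [this]
  exact (((measurable_fract.comp (measurable_id.add_const _)).sub_const _).abs)

/-- The periodic version of the rectangle membership conditions. -/
def PAset (x : ℝ × ℝ) (i j : ℝ) (φ : ℕ → ℝ) (q : ℤ) : Set (ℝ × ℝ) :=
  {y | nint (q * x.1 - y.1) ≤ φ q.natAbs ^ i ∧ nint (q * x.2 - y.2) ≤ φ q.natAbs ^ j}

lemma PAset_measurable (x : ℝ × ℝ) (i j : ℝ) (φ : ℕ → ℝ) (q : ℤ) :
    MeasurableSet (PAset x i j φ q) := by
  apply MeasurableSet.inter
  · exact measurableSet_le (measurable_nint.comp ((measurable_const.sub measurable_fst)))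
      measurable_const
  · exact measurableSet_le (measurable_nint.comp ((measurable_const.sub measurable_snd)))
      measurable_const

/-- ℤ²-periodicity of a subset of `ℝ × ℝ`, as a preimage identity. -/
def Per2 (P : Set (ℝ × ℝ)) : Prop :=
  ∀ m n : ℤ, (fun y : ℝ × ℝ => (y.1 + (m : ℝ), y.2 + (n : ℝ))) ⁻¹' P = P

lemma Per2.inter {P P' : Set (ℝ × ℝ)} (h : Per2 P) (h' : Per2 P') : Per2 (P ∩ P') := by
  intro m n; rw [Set.preimage_inter, h, h']

lemma Per2.diff {P P' : Set (ℝ × ℝ)} (h : Per2 P) (h' : Per2 P') : Per2 (P \ P') := by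
  intro m n; rw [Set.preimage_diff, h, h']

lemma Per2.iUnion {κ : Sort*} {P : κ → Set (ℝ × ℝ)} (h : ∀ k, Per2 (P k)) :
    Per2 (⋃ k, P k) := by
  intro m n; rw [Set.preimage_iUnion]; exact Set.iUnion_congr fun k => h k m n

lemma Per2.biUnion {κ : Type*} {s : Finset κ} {P : κ → Set (ℝ × ℝ)} (h : ∀ k, Per2 (P k)) :
    Per2 (⋃ k ∈ s, P k) := by
  intro m n
  rw [Set.preimage_iUnion₂]
  exact Set.iUnion₂_congr fun k _ => h k m n

lemma PAset_periodic (x : ℝ × ℝ) (i j : ℝ) (φ : ℕ → ℝ) (q : ℤ) : Per2 (PAset x i j φ q) := by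
  intro m n
  ext y
  simp only [Set.mem_preimage, PAset, Set.mem_setOf_eq]
  have e1 : q * x.1 - (y.1 + (m : ℝ)) = (q * x.1 - y.1) + ((-m : ℤ) : ℝ) := by push_cast; ring
  have e2 : q * x.2 - (y.2 + (n : ℝ)) = (q * x.2 - y.2) + ((-n : ℤ) : ℝ) := by push_cast; ring
  rw [e1, e2, nint_add_int, nint_add_int]

lemma cells1 {P : Set (ℝ × ℝ)} (hP : Per2 P) (hPm : MeasurableSet P)
    {J : Set ℝ} (hJ : MeasurableSet J) (a : ℝ) :
    volume (P ∩ (Ico a (a + 1)) ×ˢ J) = volume (P ∩ (Ico 0 1) ×ˢ J) := by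
  set n : ℤ := ⌊a⌋ with hn
  have hfl : (n : ℝ) ≤ a ∧ a < n + 1 := ⟨Int.floor_le a, Int.lt_floor_add_one a⟩
  have hsplit : Ico a (a + 1) = Ico a ((n : ℝ) + 1) ∪ Ico ((n : ℝ) + 1) (a + 1) := by
    rw [Ico_union_Ico_eq_Ico] <;> linarith [hfl.1, hfl.2]
  have hdisj : Disjoint (Ico a ((n : ℝ) + 1)) (Ico ((n : ℝ) + 1) (a + 1)) :=
    Set.Ico_disjoint_Ico_same
  have hsplit0 : Ico (0 : ℝ) 1 = Ico (a - n) 1 ∪ Ico 0 (a - n) := by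
    rw [Set.union_comm, Ico_union_Ico_eq_Ico] <;> linarith [hfl.1, hfl.2]
  have hdisj0 : Disjoint (Ico (a - (n : ℝ)) 1) (Ico (0 : ℝ) (a - n)) :=
    (Set.Ico_disjoint_Ico_same).symm
  have key : ∀ (b c : ℝ) (m : ℤ),
      volume (P ∩ (Ico (b + m) (c + m)) ×ˢ J) = volume (P ∩ (Ico b c) ×ˢ J) := by
    intro b c m
    have hvol := measure_preimage_add_right volume (((m : ℝ), (0 : ℝ)) : ℝ × ℝ)
      (P ∩ (Ico (b + m) (c + m)) ×ˢ J)
    rw [← hvol]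
    congr 1
    ext y
    have h5 : y + ((m : ℝ), (0 : ℝ)) = (y.1 + (m : ℝ), y.2 + ((0 : ℤ) : ℝ)) := by
      simp [Prod.ext_iff]
    simp only [Set.mem_preimage, h5, Set.mem_inter_iff, Set.mem_prod, Set.mem_Ico]
    have h6 : (y.1 + (m : ℝ), y.2 + ((0 : ℤ) : ℝ)) ∈ P ↔ y ∈ P := by
      conv_rhs => rw [← hP m 0]
      exact Iff.rfl
    rw [h6]
    have h7 : y.2 + ((0 : ℤ) : ℝ) = y.2 := by simp
    rw [h7]
    constructor
    · rintro ⟨hy, ⟨h1, h2⟩, h3⟩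
      exact ⟨hy, ⟨by linarith, by linarith⟩, h3⟩
    · rintro ⟨hy, ⟨h1, h2⟩, h3⟩
      exact ⟨hy, ⟨by linarith, by linarith⟩, h3⟩
  have m1 : MeasurableSet (P ∩ (Ico ((n : ℝ) + 1) (a + 1)) ×ˢ J) :=
    hPm.inter (measurableSet_Ico.prod hJ)
  have m0 : MeasurableSet (P ∩ (Ico (0 : ℝ) (a - n)) ×ˢ J) :=
    hPm.inter (measurableSet_Ico.prod hJ)
  have e1 : volume (P ∩ (Ico a (a + 1)) ×ˢ J)
      = volume (P ∩ (Ico a ((n : ℝ) + 1)) ×ˢ J)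
        + volume (P ∩ (Ico ((n : ℝ) + 1) (a + 1)) ×ˢ J) := by
    rw [hsplit, Set.union_prod, Set.inter_union_distrib_left]
    exact measure_union ((hdisj.preimage Prod.fst).mono
      (Set.inter_subset_right.trans (fun y hy => hy.1))
      (Set.inter_subset_right.trans (fun y hy => hy.1))) m1
  have e0 : volume (P ∩ (Ico (0 : ℝ) 1) ×ˢ J)
      = volume (P ∩ (Ico (a - (n : ℝ)) 1) ×ˢ J)
        + volume (P ∩ (Ico (0 : ℝ) (a - n)) ×ˢ J) := by
    rw [hsplit0, Set.union_prod, Set.inter_union_distrib_left]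
    exact measure_union ((hdisj0.preimage Prod.fst).mono
      (Set.inter_subset_right.trans (fun y hy => hy.1))
      (Set.inter_subset_right.trans (fun y hy => hy.1))) m0
  have k1 : volume (P ∩ (Ico a ((n : ℝ) + 1)) ×ˢ J)
      = volume (P ∩ (Ico (a - (n : ℝ)) 1) ×ˢ J) := by
    have := key (a - n) 1 n
    have ha : a - (n : ℝ) + n = a := by ring
    have hb : (1 : ℝ) + n = (n : ℝ) + 1 := by ring
    rw [ha, hb] at this
    exact this
  have k2 : volume (P ∩ (Ico ((n : ℝ) + 1) (a + 1)) ×ˢ J)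
      = volume (P ∩ (Ico (0 : ℝ) (a - n)) ×ˢ J) := by
    have := key 0 (a - n) (n + 1)
    have ha : (0 : ℝ) + ((n + 1 : ℤ) : ℝ) = (n : ℝ) + 1 := by push_cast; ring
    have hb : a - (n : ℝ) + ((n + 1 : ℤ) : ℝ) = a + 1 := by push_cast; ring
    rw [ha, hb] at this
    exact this
  rw [e1, e0, k1, k2]

lemma cells2 {P : Set (ℝ × ℝ)} (hP : Per2 P) (hPm : MeasurableSet P)
    {I : Set ℝ} (hI : MeasurableSet I) (a : ℝ) :
    volume (P ∩ I ×ˢ (Ico a (a + 1))) = volume (P ∩ I ×ˢ (Ico 0 1)) := by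
  set n : ℤ := ⌊a⌋ with hn
  have hfl : (n : ℝ) ≤ a ∧ a < n + 1 := ⟨Int.floor_le a, Int.lt_floor_add_one a⟩
  have hsplit : Ico a (a + 1) = Ico a ((n : ℝ) + 1) ∪ Ico ((n : ℝ) + 1) (a + 1) := by
    rw [Ico_union_Ico_eq_Ico] <;> linarith [hfl.1, hfl.2]
  have hdisj : Disjoint (Ico a ((n : ℝ) + 1)) (Ico ((n : ℝ) + 1) (a + 1)) :=
    Set.Ico_disjoint_Ico_same
  have hsplit0 : Ico (0 : ℝ) 1 = Ico (a - n) 1 ∪ Ico 0 (a - n) := by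
    rw [Set.union_comm, Ico_union_Ico_eq_Ico] <;> linarith [hfl.1, hfl.2]
  have hdisj0 : Disjoint (Ico (a - (n : ℝ)) 1) (Ico (0 : ℝ) (a - n)) :=
    Set.Ico_disjoint_Ico_same.symm
  have key : ∀ (b c : ℝ) (m : ℤ),
      volume (P ∩ I ×ˢ (Ico (b + m) (c + m))) = volume (P ∩ I ×ˢ (Ico b c)) := by
    intro b c m
    have hvol := measure_preimage_add_right volume (((0 : ℝ), (m : ℝ)) : ℝ × ℝ)
      (P ∩ I ×ˢ (Ico (b + m) (c + m)))
    rw [← hvol]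
    congr 1
    ext y
    have h5 : y + ((0 : ℝ), (m : ℝ)) = (y.1 + ((0 : ℤ) : ℝ), y.2 + (m : ℝ)) := by
      simp [Prod.ext_iff]
    simp only [Set.mem_preimage, h5, Set.mem_inter_iff, Set.mem_prod, Set.mem_Ico]
    have h6 : (y.1 + ((0 : ℤ) : ℝ), y.2 + (m : ℝ)) ∈ P ↔ y ∈ P := by
      conv_rhs => rw [← hP 0 m]
      exact Iff.rfl
    rw [h6]
    have h7 : y.1 + ((0 : ℤ) : ℝ) = y.1 := by simp
    rw [h7]
    constructor
    · rintro ⟨hy, h3, h1, h2⟩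
      exact ⟨hy, h3, by linarith, by linarith⟩
    · rintro ⟨hy, h3, h1, h2⟩
      exact ⟨hy, h3, by linarith, by linarith⟩
  have m1 : MeasurableSet (P ∩ I ×ˢ (Ico ((n : ℝ) + 1) (a + 1))) :=
    hPm.inter (hI.prod measurableSet_Ico)
  have m0 : MeasurableSet (P ∩ I ×ˢ (Ico (0 : ℝ) (a - n))) :=
    hPm.inter (hI.prod measurableSet_Ico)
  have e1 : volume (P ∩ I ×ˢ (Ico a (a + 1)))
      = volume (P ∩ I ×ˢ (Ico a ((n : ℝ) + 1)))
        + volume (P ∩ I ×ˢ (Ico ((n : ℝ) + 1) (a + 1))) := by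
    rw [hsplit, Set.prod_union, Set.inter_union_distrib_left]
    exact measure_union ((hdisj.preimage Prod.snd).mono
      (Set.inter_subset_right.trans (fun y hy => hy.2))
      (Set.inter_subset_right.trans (fun y hy => hy.2))) m1
  have e0 : volume (P ∩ I ×ˢ (Ico (0 : ℝ) 1))
      = volume (P ∩ I ×ˢ (Ico (a - (n : ℝ)) 1))
        + volume (P ∩ I ×ˢ (Ico (0 : ℝ) (a - n))) := by
    rw [hsplit0, Set.prod_union, Set.inter_union_distrib_left]
    exact measure_union ((hdisj0.preimage Prod.snd).mono
      (Set.inter_subset_right.trans (fun y hy => hy.2))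
      (Set.inter_subset_right.trans (fun y hy => hy.2))) m0
  have k1 : volume (P ∩ I ×ˢ (Ico a ((n : ℝ) + 1)))
      = volume (P ∩ I ×ˢ (Ico (a - (n : ℝ)) 1)) := by
    have h := key (a - n) 1 n
    have ha : a - (n : ℝ) + n = a := by ring
    have hb : (1 : ℝ) + n = (n : ℝ) + 1 := by ring
    rw [ha, hb] at h
    exact h
  have k2 : volume (P ∩ I ×ˢ (Ico ((n : ℝ) + 1) (a + 1)))
      = volume (P ∩ I ×ˢ (Ico (0 : ℝ) (a - n))) := by
    have h := key 0 (a - n) (n + 1)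
    have ha : (0 : ℝ) + ((n + 1 : ℤ) : ℝ) = (n : ℝ) + 1 := by push_cast; ring
    have hb : a - (n : ℝ) + ((n + 1 : ℤ) : ℝ) = a + 1 := by push_cast; ring
    rw [ha, hb] at h
    exact h
  rw [e1, e0, k1, k2]

lemma cells {P : Set (ℝ × ℝ)} (hP : Per2 P) (hPm : MeasurableSet P) (a b : ℝ) :
    volume (P ∩ (Ico a (a + 1)) ×ˢ (Ico b (b + 1)))
      = volume (P ∩ (Ico (0 : ℝ) 1) ×ˢ (Ico (0 : ℝ) 1)) := by
  rw [cells1 hP hPm measurableSet_Ico a, cells2 hP hPm measurableSet_Ico b]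

lemma smul_prod_meas {μ ν : Measure ℝ} [SFinite μ] [SFinite ν] (c : ENNReal) :
    (c • μ).prod ν = c • μ.prod ν := by
  ext s hs
  rw [Measure.smul_apply, Measure.prod_apply hs, Measure.prod_apply hs,
    lintegral_smul_measure]

lemma prod_smul_meas {μ ν : Measure ℝ} [SFinite μ] [SFinite ν] {c : ENNReal} (hc : c ≠ ⊤) :
    μ.prod (c • ν) = c • μ.prod ν := by
  ext s hs
  rw [Measure.smul_apply, Measure.prod_apply hs, Measure.prod_apply hs, smul_eq_mul,
    ← lintegral_const_mul' _ _ hc]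
  simp only [Measure.smul_apply, smul_eq_mul]

lemma map_affine_volume {r b : ℝ} (hr : r ≠ 0) :
    Measure.map (fun t : ℝ => r * t + b) volume = ENNReal.ofReal |r⁻¹| • volume := by
  have h1 : (fun t : ℝ => r * t + b) = (fun t : ℝ => t + b) ∘ (fun t : ℝ => r * t) := rfl
  rw [h1, ← Measure.map_map (measurable_add_const b) (measurable_const_mul r),
    Real.map_volume_mul_left hr, Measure.map_smul, map_add_right_eq_self volume b]

lemma scale_pair {r₁ r₂ : ℝ} (h₁ : 0 < r₁) (h₂ : 0 < r₂) (c₁ c₂ : ℝ) (E : Set (ℝ × ℝ)) :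
    volume E = ENNReal.ofReal (r₁⁻¹ * r₂⁻¹)
      * volume ((fun y : ℝ × ℝ => (c₁ + r₁ * (y.1 - c₁), c₂ + r₂ * (y.2 - c₂))) '' E) := by
  set f : ℝ ≃ₜ ℝ := affineHomeomorph r₁ (c₁ - r₁ * c₁) h₁.ne'
  set g : ℝ ≃ₜ ℝ := affineHomeomorph r₂ (c₂ - r₂ * c₂) h₂.ne'
  set h : (ℝ × ℝ) ≃ₜ (ℝ × ℝ) := f.prodCongr g
  have hfun : ⇑h = (fun y : ℝ × ℝ => (c₁ + r₁ * (y.1 - c₁), c₂ + r₂ * (y.2 - c₂))) := by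
    funext y
    show (f y.1, g y.2) = _
    simp only [f, g, affineHomeomorph_apply]
    exact Prod.ext (by ring) (by ring)
  have hemb : MeasurableEmbedding (⇑h) := h.measurableEmbedding
  have hmap : Measure.map (⇑h) volume = ENNReal.ofReal (r₁⁻¹ * r₂⁻¹) • volume := by
    have hprodmap : ⇑h = Prod.map (⇑f) (⇑g) := rfl
    have hvol : (volume : Measure (ℝ × ℝ)) = (volume : Measure ℝ).prod volume := rfl
    rw [hprodmap, hvol, ← Measure.map_prod_map _ _ f.measurable g.measurable]
    have hf : Measure.map (⇑f) volume = ENNReal.ofReal |r₁⁻¹| • volume := by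
      have : ⇑f = fun t : ℝ => r₁ * t + (c₁ - r₁ * c₁) := by
        funext t; simp [f, affineHomeomorph_apply]
      rw [this]; exact map_affine_volume h₁.ne'
    have hg : Measure.map (⇑g) volume = ENNReal.ofReal |r₂⁻¹| • volume := by
      have : ⇑g = fun t : ℝ => r₂ * t + (c₂ - r₂ * c₂) := by
        funext t; simp [g, affineHomeomorph_apply]
      rw [this]; exact map_affine_volume h₂.ne'
    rw [hf, hg, smul_prod_meas, prod_smul_meas ENNReal.ofReal_ne_top, smul_smul,
      ← ENNReal.ofReal_mul (abs_nonneg _)]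
    congr 2
    rw [abs_of_pos (inv_pos.mpr h₁), abs_of_pos (inv_pos.mpr h₂)]
  have key : volume E = Measure.map (⇑h) volume (⇑h '' E) := by
    rw [hemb.map_apply, Set.preimage_image_eq E h.injective]
  rw [key, hmap, ← hfun]
  rfl

lemma scale_image_measurable {r₁ r₂ : ℝ} (h₁ : 0 < r₁) (h₂ : 0 < r₂) (c₁ c₂ : ℝ)
    {E : Set (ℝ × ℝ)} (hE : MeasurableSet E) :
    MeasurableSet ((fun y : ℝ × ℝ => (c₁ + r₁ * (y.1 - c₁), c₂ + r₂ * (y.2 - c₂))) '' E) := by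
  set f : ℝ ≃ₜ ℝ := affineHomeomorph r₁ (c₁ - r₁ * c₁) h₁.ne'
  set g : ℝ ≃ₜ ℝ := affineHomeomorph r₂ (c₂ - r₂ * c₂) h₂.ne'
  set h : (ℝ × ℝ) ≃ₜ (ℝ × ℝ) := f.prodCongr g
  have hfun : ⇑h = (fun y : ℝ × ℝ => (c₁ + r₁ * (y.1 - c₁), c₂ + r₂ * (y.2 - c₂))) := by
    funext y
    show (f y.1, g y.2) = _
    simp only [f, g, affineHomeomorph_apply]
    exact Prod.ext (by ring) (by ring)
  rw [← hfun]
  exact h.measurableEmbedding.measurableSet_image.mpr hE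

lemma one_lt_rpow_two {e : ℝ} (he : 0 < e) : (1 : ℝ) < (2 : ℝ) ^ e := by
  have := Real.rpow_lt_rpow_of_exponent_lt (by norm_num : (1:ℝ) < 2) he
  rwa [Real.rpow_zero] at this

lemma coord_bounds {e ψq c y : ℝ} (he : 0 < e) (hψ : 0 ≤ ψq)
    (hmem : nint (c - y) ≤ (2 * ψq) ^ e)
    (hcl : c - 2⁻¹ ≤ y) (hcr : y < c + 2⁻¹) :
    |(c + ((2:ℝ)^e)⁻¹ * (y - c)) - c| ≤ ψq ^ e ∧
    |(c + ((2:ℝ)^e)⁻¹ * (y - c)) - c| < 2⁻¹ ∧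
    |(c + ((2:ℝ)^e)⁻¹ * (y - c)) - y| ≤ ((2:ℝ)^e - 1) * ψq ^ e := by
  have h2e : (1:ℝ) < (2:ℝ)^e := one_lt_rpow_two he
  set r : ℝ := ((2:ℝ)^e)⁻¹ with hrdef
  have hr : 0 < r := inv_pos.mpr (by linarith)
  have hr1 : r < 1 := by
    rw [hrdef, inv_lt_one_iff₀]; right; exact h2e
  have habs : |y - c| ≤ 2⁻¹ := abs_le.2 ⟨by linarith, by linarith⟩
  have h1 : nint (c - y) = |y - c| := by
    rw [nint_eq_abs (by rw [abs_sub_comm]; simpa using habs), abs_sub_comm]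
  have hyc : |y - c| ≤ (2 * ψq) ^ e := h1 ▸ hmem
  have hmul : (2 * ψq) ^ e = (2:ℝ)^e * ψq ^ e := Real.mul_rpow (by norm_num) hψ
  have habs1 : |(c + r * (y - c)) - c| = r * |y - c| := by
    have : (c + r * (y - c)) - c = r * (y - c) := by ring
    rw [this, abs_mul, abs_of_pos hr]
  have hre : r * (2:ℝ)^e = 1 := inv_mul_cancel₀ (by linarith)
  refine ⟨?_, ?_, ?_⟩
  · rw [habs1]
    calc r * |y - c| ≤ r * ((2:ℝ)^e * ψq ^ e) := by
          apply mul_le_mul_of_nonneg_left _ hr.le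
          rw [← hmul]; exact hyc
      _ = ψq ^ e := by rw [← mul_assoc, hre, one_mul]
  · rw [habs1]
    calc r * |y - c| ≤ r * 2⁻¹ := mul_le_mul_of_nonneg_left habs hr.le
      _ < 1 * 2⁻¹ := by
          apply mul_lt_mul_of_pos_right hr1; norm_num
      _ = 2⁻¹ := one_mul _
  · have heq : (c + r * (y - c)) - y = (r - 1) * (y - c) := by ring
    rw [heq, abs_mul, abs_of_neg (by linarith : r - 1 < 0)]
    have h2 : -(r - 1) = 1 - r := by ring
    rw [h2]
    calc (1 - r) * |y - c| ≤ (1 - r) * ((2:ℝ)^e * ψq ^ e) := by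
          apply mul_le_mul_of_nonneg_left _ (by linarith)
          rw [← hmul]; exact hyc
      _ = ((2:ℝ)^e - 1) * ψq ^ e := by
          have : (1 - r) * ((2:ℝ)^e * ψq ^ e) = ((1-r) * (2:ℝ)^e) * ψq ^ e := by ring
          rw [this]
          congr 1
          have : (1 - r) * (2:ℝ)^e = (2:ℝ)^e - r * (2:ℝ)^e := by ring
          rw [this, hre]

def keyZ (q : ℤ) : Lex (ℕ × ℤ) := toLex (q.natAbs, q)

lemma keyZ_natAbs_le {a b : ℤ} (h : keyZ a < keyZ b) : a.natAbs ≤ b.natAbs := by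
  rw [keyZ, keyZ, Prod.Lex.lt_iff] at h
  rcases h with h | ⟨h, _⟩
  · exact h.le
  · exact h.le

lemma keyZ_ne {a b : ℤ} (h : a ≠ b) : keyZ a ≠ keyZ b := by
  intro hk
  rw [keyZ, keyZ] at hk
  have := congrArg (fun p => (ofLex p).2) hk
  exact h this

def Vset (x : ℝ × ℝ) (i j : ℝ) (φ : ℕ → ℝ) (Q : Finset ℤ) (q : ℤ) : Set (ℝ × ℝ) :=
  PAset x i j φ q \ ⋃ (q' : ℤ) (_ : q' ∈ Q ∧ keyZ q' < keyZ q), PAset x i j φ q'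

lemma Vset_measurable (x : ℝ × ℝ) (i j : ℝ) (φ : ℕ → ℝ) (Q : Finset ℤ) (q : ℤ) :
    MeasurableSet (Vset x i j φ Q q) :=
  (PAset_measurable x i j φ q).diff
    (MeasurableSet.iUnion fun q' => MeasurableSet.iUnion fun _ => PAset_measurable x i j φ q')

lemma Vset_periodic (x : ℝ × ℝ) (i j : ℝ) (φ : ℕ → ℝ) (Q : Finset ℤ) (q : ℤ) :
    Per2 (Vset x i j φ Q q) :=
  (PAset_periodic x i j φ q).diff
    (Per2.iUnion fun q' => Per2.iUnion fun _ => PAset_periodic x i j φ q')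

lemma Vset_cover (x : ℝ × ℝ) (i j : ℝ) (φ : ℕ → ℝ) (Q : Finset ℤ) {γ : ℝ × ℝ}
    (h : γ ∈ ⋃ q ∈ Q, PAset x i j φ q) : γ ∈ ⋃ q ∈ Q, Vset x i j φ Q q := by
  classical
  set s : Finset ℤ := Q.filter (fun q => γ ∈ PAset x i j φ q) with hs
  have hne : s.Nonempty := by
    rw [Set.mem_iUnion₂] at h
    obtain ⟨q, hq, hγ⟩ := h
    exact ⟨q, by simp [hs, hq, hγ]⟩
  obtain ⟨q, hq, hmin⟩ := Finset.exists_min_image s keyZ hne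
  have hqQ : q ∈ Q := (Finset.mem_filter.mp hq).1
  have hqγ : γ ∈ PAset x i j φ q := (Finset.mem_filter.mp hq).2
  rw [Set.mem_iUnion₂]
  refine ⟨q, hqQ, hqγ, ?_⟩
  intro hmem
  rw [Set.mem_iUnion] at hmem
  obtain ⟨q', hmem⟩ := hmem
  rw [Set.mem_iUnion] at hmem
  obtain ⟨⟨hq'Q, hlt⟩, hγ'⟩ := hmem
  have : q' ∈ s := Finset.mem_filter.mpr ⟨hq'Q, hγ'⟩
  exact absurd (hmin q' this) (not_le.mpr hlt)

theorem stmt15 (i j : ℝ) (hi : 0 < i) (hj : 0 < j) (hij : i + j = 1)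
    (x : ℝ × ℝ) (ψ : ℕ → ℝ) (hpos : ∀ r, 0 < ψ r) (hanti : Antitone ψ)
    (hsmall : ∀ r, ψ r ≤ (2 : ℝ) ^ (-(1 / max i j)) / 2)
    (Q : Finset ℤ) (hQ : (0 : ℤ) ∉ Q) :
    volume (⋃ q ∈ Q, rect x i j (fun r => 2 * ψ r) q)
      ≤ 2 * volume (⋃ q ∈ Q, rect x i j ψ q) := by
  classical
  have h2i : (1:ℝ) < (2:ℝ) ^ i := one_lt_rpow_two hi
  have h2j : (1:ℝ) < (2:ℝ) ^ j := one_lt_rpow_two hj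
  set φ2 : ℕ → ℝ := fun r => 2 * ψ r with hφ2
  set c₁ : ℤ → ℝ := fun q => q * x.1 with hc₁
  set c₂ : ℤ → ℝ := fun q => q * x.2 with hc₂
  set V : ℤ → Set (ℝ × ℝ) := fun q => Vset x i j φ2 Q q with hV
  set D : Set (ℝ × ℝ) := Ico (0:ℝ) 1 ×ˢ Ico (0:ℝ) 1 with hD
  set cell : ℤ → Set (ℝ × ℝ) :=
    fun q => Ico (c₁ q - 2⁻¹) (c₁ q - 2⁻¹ + 1) ×ˢ Ico (c₂ q - 2⁻¹) (c₂ q - 2⁻¹ + 1) with hcell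
  set Sm : ℤ → (ℝ × ℝ) → (ℝ × ℝ) := fun q y =>
    (c₁ q + ((2:ℝ)^i)⁻¹ * (y.1 - c₁ q), c₂ q + ((2:ℝ)^j)⁻¹ * (y.2 - c₂ q)) with hSm
  set W : ℤ → Set (ℝ × ℝ) := fun q => Sm q '' (V q ∩ cell q) with hW
  set Wt : ℤ → Set (ℝ × ℝ) :=
    fun q => ⋃ m : ℤ × ℤ, (fun z : ℝ × ℝ => (z.1 - (m.1 : ℝ), z.2 - (m.2 : ℝ))) ⁻¹' W q with hWt
  -- measurability
  have hVm : ∀ q, MeasurableSet (V q) := fun q => Vset_measurable x i j φ2 Q q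
  have hVcellm : ∀ q, MeasurableSet (V q ∩ cell q) :=
    fun q => (hVm q).inter (measurableSet_Ico.prod measurableSet_Ico)
  have hWm : ∀ q, MeasurableSet (W q) :=
    fun q => scale_image_measurable (inv_pos.mpr (by linarith)) (inv_pos.mpr (by linarith))
      (c₁ q) (c₂ q) (hVcellm q)
  have hWtm : ∀ q, MeasurableSet (Wt q) := fun q =>
    MeasurableSet.iUnion fun m =>
      ((measurable_fst.sub_const _).prodMk (measurable_snd.sub_const _)) (hWm q)
  have hVper : ∀ q, Per2 (V q) := fun q => Vset_periodic x i j φ2 Q q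
  have hWtper : ∀ q, Per2 (Wt q) := by
    intro q m n
    ext z
    simp only [hWt, Set.mem_preimage, Set.mem_iUnion]
    constructor
    · rintro ⟨mm, hmm⟩
      refine ⟨(mm.1 - m, mm.2 - n), ?_⟩
      have e1 : z.1 - ((mm.1 - m : ℤ) : ℝ) = z.1 + (m : ℝ) - (mm.1 : ℝ) := by push_cast; ring
      have e2 : z.2 - ((mm.2 - n : ℤ) : ℝ) = z.2 + (n : ℝ) - (mm.2 : ℝ) := by push_cast; ring
      rw [e1, e2]
      exact hmm
    · rintro ⟨mm, hmm⟩
      refine ⟨(mm.1 + m, mm.2 + n), ?_⟩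
      have e1 : z.1 + (m : ℝ) - ((mm.1 + m : ℤ) : ℝ) = z.1 - (mm.1 : ℝ) := by push_cast; ring
      have e2 : z.2 + (n : ℝ) - ((mm.2 + n : ℤ) : ℝ) = z.2 - (mm.2 : ℝ) := by push_cast; ring
      rw [← e1, ← e2] at hmm
      exact hmm
  -- bounds for points of W q
  have hWbound : ∀ q, ∀ z ∈ W q,
      (|z.1 - c₁ q| ≤ ψ q.natAbs ^ i ∧ |z.1 - c₁ q| < 2⁻¹) ∧
      (|z.2 - c₂ q| ≤ ψ q.natAbs ^ j ∧ |z.2 - c₂ q| < 2⁻¹) := by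
    intro q z hz
    obtain ⟨y, ⟨hyV, hycell⟩, rfl⟩ := hz
    have hyA : y ∈ PAset x i j φ2 q := hyV.1
    have hmem1 : nint (c₁ q - y.1) ≤ (2 * ψ q.natAbs) ^ i := hyA.1
    have hmem2 : nint (c₂ q - y.2) ≤ (2 * ψ q.natAbs) ^ j := hyA.2
    have hcell1 := hycell.1
    have hcell2 := hycell.2
    rw [Set.mem_Ico] at hcell1 hcell2
    have hb1 := coord_bounds hi (hpos q.natAbs).le hmem1 hcell1.1 (by linarith [hcell1.2])
    have hb2 := coord_bounds hj (hpos q.natAbs).le hmem2 hcell2.1 (by linarith [hcell2.2])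
    exact ⟨⟨hb1.1, hb1.2.1⟩, ⟨hb2.1, hb2.2.1⟩⟩
  -- W q sits inside its cell
  have hWcell : ∀ q, W q ⊆ cell q := by
    intro q z hz
    obtain ⟨⟨_, h1⟩, ⟨_, h2⟩⟩ := hWbound q z hz
    rw [abs_lt] at h1 h2
    constructor
    · rw [Set.mem_Ico]; constructor <;> [linarith [h1.1]; linarith [h1.2]]
    · rw [Set.mem_Ico]; constructor <;> [linarith [h2.1]; linarith [h2.2]]
  -- Wt q ∩ cell q = W q
  have hWtcell : ∀ q, Wt q ∩ cell q = W q := by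
    intro q
    apply Set.Subset.antisymm
    · rintro z ⟨hzWt, hzcell⟩
      simp only [hWt, Set.mem_iUnion, Set.mem_preimage] at hzWt
      obtain ⟨m, hm⟩ := hzWt
      have hwcell := hWcell q hm
      simp only [hcell, Set.mem_prod, Set.mem_Ico] at hwcell hzcell
      have hm1 : m.1 = 0 := by
        have habs : |(m.1 : ℝ)| < 1 := by
          rw [abs_lt]
          constructor <;>
            linarith [hwcell.1.1, hwcell.1.2, hzcell.1.1, hzcell.1.2]
        have habs2 : |m.1| < 1 := by
          have := habs
          rw [← Int.cast_abs] at this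
          exact_mod_cast this
        have := abs_lt.mp habs2
        omega
      have hm2 : m.2 = 0 := by
        have habs : |(m.2 : ℝ)| < 1 := by
          rw [abs_lt]
          constructor <;>
            linarith [hwcell.2.1, hwcell.2.2, hzcell.2.1, hzcell.2.2]
        have habs2 : |m.2| < 1 := by
          have := habs
          rw [← Int.cast_abs] at this
          exact_mod_cast this
        have := abs_lt.mp habs2
        omega
      rw [hm1, hm2] at hm
      simpa using hm
    · intro z hz
      refine ⟨?_, hWcell q hz⟩
      simp only [hWt, Set.mem_iUnion, Set.mem_preimage]
      exact ⟨(0, 0), by simpa using hz⟩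
  -- volume identities via the fundamental-cell lemma
  have hVvol : ∀ q, volume (V q ∩ D) = volume (V q ∩ cell q) := by
    intro q
    rw [hcell]
    rw [cells (hVper q) (hVm q) (c₁ q - 2⁻¹) (c₂ q - 2⁻¹)]
  have hWtvol : ∀ q, volume (Wt q ∩ D) = volume (W q) := by
    intro q
    rw [← hWtcell q, hcell]
    rw [cells (hWtper q) (hWtm q) (c₁ q - 2⁻¹) (c₂ q - 2⁻¹)]
  -- scaling
  have hScale : ∀ q, volume (V q ∩ cell q) = 2 * volume (W q) := by
    intro q
    have h := scale_pair (r₁ := ((2:ℝ)^i)⁻¹) (r₂ := ((2:ℝ)^j)⁻¹)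
      (inv_pos.mpr (by linarith)) (inv_pos.mpr (by linarith)) (c₁ q) (c₂ q) (V q ∩ cell q)
    rw [inv_inv, inv_inv] at h
    have h2 : (2:ℝ)^i * (2:ℝ)^j = 2 := by
      rw [← Real.rpow_add (by norm_num : (0:ℝ) < 2), hij, Real.rpow_one]
    rw [h2] at h
    have h3 : ENNReal.ofReal (2:ℝ) = 2 := by
      rw [ENNReal.ofReal_ofNat]
    rw [h3] at h
    exact h
  -- the exceptional null set
  have hEnull : volume (Set.Icc (0 : ℝ × ℝ) 1 \ D) = 0 := by
    have hsub : Set.Icc (0 : ℝ × ℝ) 1 \ D ⊆ ({(1:ℝ)} ×ˢ (Set.univ : Set ℝ)) ∪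
        ((Set.univ : Set ℝ) ×ˢ {(1:ℝ)}) := by
      rintro γ ⟨hγI, hγD⟩
      rw [Set.mem_Icc] at hγI
      have h01 : (0:ℝ) ≤ γ.1 ∧ (0:ℝ) ≤ γ.2 := ⟨hγI.1.1, hγI.1.2⟩
      have h11 : γ.1 ≤ 1 ∧ γ.2 ≤ 1 := ⟨hγI.2.1, hγI.2.2⟩
      by_cases hone : γ.1 = 1
      · exact Or.inl ⟨hone, trivial⟩
      · right
        refine ⟨trivial, ?_⟩
        by_contra hone2
        apply hγD
        constructor
        · rw [Set.mem_Ico]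
          exact ⟨h01.1, lt_of_le_of_ne h11.1 hone⟩
        · rw [Set.mem_Ico]
          exact ⟨h01.2, lt_of_le_of_ne h11.2 hone2⟩
    apply measure_mono_null hsub
    apply measure_union_null
    · rw [show (volume : Measure (ℝ × ℝ)) = (volume : Measure ℝ).prod volume from rfl,
        Measure.prod_prod]
      simp
    · rw [show (volume : Measure (ℝ × ℝ)) = (volume : Measure ℝ).prod volume from rfl,
        Measure.prod_prod]
      simp
  -- LHS covering
  have hcover : (⋃ q ∈ Q, rect x i j φ2 q) ⊆
      (⋃ q ∈ Q, (V q ∩ D)) ∪ (Set.Icc (0 : ℝ × ℝ) 1 \ D) := by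
    intro γ hγ
    rw [Set.mem_iUnion₂] at hγ
    obtain ⟨q0, hq0, hγr⟩ := hγ
    have hγIcc : γ ∈ Set.Icc (0 : ℝ × ℝ) 1 := hγr.1
    by_cases hγD : γ ∈ D
    · left
      have hγP : γ ∈ ⋃ q ∈ Q, PAset x i j φ2 q := by
        rw [Set.mem_iUnion₂]
        exact ⟨q0, hq0, hγr.2.1, hγr.2.2⟩
      have := Vset_cover x i j φ2 Q hγP
      rw [Set.mem_iUnion₂] at this ⊢
      obtain ⟨q, hq, hγV⟩ := this
      exact ⟨q, hq, hγV, hγD⟩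
    · exact Or.inr ⟨hγIcc, hγD⟩
  -- disjointness of the Wt pieces
  have hdisjcore : ∀ q ∈ Q, ∀ q' ∈ Q, keyZ q < keyZ q' →
      ∀ z ∈ W q, ∀ z' ∈ W q', ∀ m₁ m₂ : ℤ,
        z'.1 - z.1 = (m₁ : ℝ) → z'.2 - z.2 = (m₂ : ℝ) → False := by
    intro q hq q' hq' hlt z hz z' hz' m₁ m₂ hm₁ hm₂
    obtain ⟨y', ⟨hy'V, hy'cell⟩, rfl⟩ := hz'
    have hy'A : y' ∈ PAset x i j φ2 q' := hy'V.1
    have hy'not : y' ∉ PAset x i j φ2 q := by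
      intro hcon
      apply hy'V.2
      rw [Set.mem_iUnion]
      exact ⟨q, Set.mem_iUnion.mpr ⟨⟨hq, hlt⟩, hcon⟩⟩
    apply hy'not
    -- bounds
    have hψle : ψ q'.natAbs ≤ ψ q.natAbs := hanti (keyZ_natAbs_le hlt)
    have hψle_i : ψ q'.natAbs ^ i ≤ ψ q.natAbs ^ i :=
      Real.rpow_le_rpow (hpos _).le hψle hi.le
    have hψle_j : ψ q'.natAbs ^ j ≤ ψ q.natAbs ^ j :=
      Real.rpow_le_rpow (hpos _).le hψle hj.le
    have hzb := hWbound q z hz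
    have hcell1 := hy'cell.1; have hcell2 := hy'cell.2
    rw [Set.mem_Ico] at hcell1 hcell2
    have hy'mem1 : nint (c₁ q' - y'.1) ≤ (2 * ψ q'.natAbs) ^ i := hy'A.1
    have hy'mem2 : nint (c₂ q' - y'.2) ≤ (2 * ψ q'.natAbs) ^ j := hy'A.2
    have hb1 := coord_bounds hi (hpos q'.natAbs).le hy'mem1 hcell1.1 (by linarith [hcell1.2])
    have hb2 := coord_bounds hj (hpos q'.natAbs).le hy'mem2 hcell2.1 (by linarith [hcell2.2])
    -- z' coordinates
    set z1' : ℝ := c₁ q' + ((2:ℝ)^i)⁻¹ * (y'.1 - c₁ q')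
    set z2' : ℝ := c₂ q' + ((2:ℝ)^j)⁻¹ * (y'.2 - c₂ q')
    have hzy1 : |z1' - y'.1| ≤ ((2:ℝ)^i - 1) * ψ q'.natAbs ^ i := hb1.2.2
    have hzy2 : |z2' - y'.2| ≤ ((2:ℝ)^j - 1) * ψ q'.natAbs ^ j := hb2.2.2
    constructor
    · -- first coordinate
      have he : c₁ q - y'.1 = ((c₁ q - z.1) + (z1' - y'.1)) + ((-m₁ : ℤ) : ℝ) := by
        push_cast
        have : z1' = z.1 + (m₁ : ℝ) := by
          have : z1' - z.1 = (m₁ : ℝ) := hm₁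
          linarith
        rw [this]; ring
      rw [he, nint_add_int]
      calc nint ((c₁ q - z.1) + (z1' - y'.1))
          ≤ nint (c₁ q - z.1) + nint (z1' - y'.1) := nint_triangle _ _
        _ ≤ |c₁ q - z.1| + |z1' - y'.1| := add_le_add (nint_le_abs _) (nint_le_abs _)
        _ ≤ ψ q.natAbs ^ i + ((2:ℝ)^i - 1) * ψ q'.natAbs ^ i := by
            apply add_le_add _ hzy1
            rw [abs_sub_comm]; exact hzb.1.1
        _ ≤ ψ q.natAbs ^ i + ((2:ℝ)^i - 1) * ψ q.natAbs ^ i := by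
            apply add_le_add_right
            apply mul_le_mul_of_nonneg_left hψle_i (by linarith)
        _ = (2:ℝ)^i * ψ q.natAbs ^ i := by ring
        _ = (2 * ψ q.natAbs) ^ i := (Real.mul_rpow (by norm_num) (hpos _).le).symm
    · -- second coordinate
      have he : c₂ q - y'.2 = ((c₂ q - z.2) + (z2' - y'.2)) + ((-m₂ : ℤ) : ℝ) := by
        push_cast
        have : z2' = z.2 + (m₂ : ℝ) := by
          have : z2' - z.2 = (m₂ : ℝ) := hm₂
          linarith
        rw [this]; ring
      rw [he, nint_add_int]
      calc nint ((c₂ q - z.2) + (z2' - y'.2))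
          ≤ nint (c₂ q - z.2) + nint (z2' - y'.2) := nint_triangle _ _
        _ ≤ |c₂ q - z.2| + |z2' - y'.2| := add_le_add (nint_le_abs _) (nint_le_abs _)
        _ ≤ ψ q.natAbs ^ j + ((2:ℝ)^j - 1) * ψ q'.natAbs ^ j := by
            apply add_le_add _ hzy2
            rw [abs_sub_comm]; exact hzb.2.1
        _ ≤ ψ q.natAbs ^ j + ((2:ℝ)^j - 1) * ψ q.natAbs ^ j := by
            apply add_le_add_right
            apply mul_le_mul_of_nonneg_left hψle_j (by linarith)
        _ = (2:ℝ)^j * ψ q.natAbs ^ j := by ring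
        _ = (2 * ψ q.natAbs) ^ j := (Real.mul_rpow (by norm_num) (hpos _).le).symm
  have hdisj : Set.PairwiseDisjoint (↑Q : Set ℤ) (fun q => Wt q ∩ D) := by
    intro q hq q' hq' hne
    have hgoal : Disjoint (Wt q ∩ D) (Wt q' ∩ D) := by
      rw [Set.disjoint_left]
      rintro z ⟨hzWt, _⟩ ⟨hzWt', _⟩
      simp only [hWt, Set.mem_iUnion, Set.mem_preimage] at hzWt hzWt'
      obtain ⟨m, hm⟩ := hzWt
      obtain ⟨m', hm'⟩ := hzWt'
      have hkne : keyZ q ≠ keyZ q' := keyZ_ne hne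
      rcases lt_or_gt_of_ne hkne with hlt | hlt
      · exact hdisjcore q (by exact_mod_cast hq) q' (by exact_mod_cast hq') hlt
          _ hm _ hm' (m.1 - m'.1) (m.2 - m'.2) (by push_cast; ring) (by push_cast; ring)
      · exact hdisjcore q' (by exact_mod_cast hq') q (by exact_mod_cast hq) hlt
          _ hm' _ hm (m'.1 - m.1) (m'.2 - m.2) (by push_cast; ring) (by push_cast; ring)
    exact hgoal
  -- final inclusion of the disjoint pieces in the ψ-union
  have hfinal : ∀ q ∈ Q, Wt q ∩ D ⊆ ⋃ q' ∈ Q, rect x i j ψ q' := by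
    intro q hq z hz
    obtain ⟨hzWt, hzD⟩ := hz
    simp only [hWt, Set.mem_iUnion, Set.mem_preimage] at hzWt
    obtain ⟨m, hm⟩ := hzWt
    have hb := hWbound q _ hm
    rw [Set.mem_iUnion₂]
    refine ⟨q, hq, ?_, ?_, ?_⟩
    · rw [Set.mem_Icc]
      have h1 := hzD.1; have h2 := hzD.2
      rw [Set.mem_Ico] at h1 h2
      constructor
      · exact ⟨h1.1, h2.1⟩
      · exact ⟨h1.2.le, h2.2.le⟩
    · have he : (q : ℝ) * x.1 - z.1 = ((q : ℝ) * x.1 - (z.1 - (m.1 : ℝ))) + ((-m.1 : ℤ) : ℝ) := by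
        push_cast; ring
      rw [he, nint_add_int]
      calc nint (((q:ℝ) * x.1) - (z.1 - (m.1:ℝ))) ≤ |((q:ℝ) * x.1) - (z.1 - (m.1:ℝ))| :=
            nint_le_abs _
        _ = |(z.1 - (m.1:ℝ)) - (q:ℝ) * x.1| := abs_sub_comm _ _
        _ ≤ ψ q.natAbs ^ i := by
            have := hb.1.1
            simpa [hc₁] using this
    · have he : (q : ℝ) * x.2 - z.2 = ((q : ℝ) * x.2 - (z.2 - (m.2 : ℝ))) + ((-m.2 : ℤ) : ℝ) := by
        push_cast; ring
      rw [he, nint_add_int]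
      calc nint (((q:ℝ) * x.2) - (z.2 - (m.2:ℝ))) ≤ |((q:ℝ) * x.2) - (z.2 - (m.2:ℝ))| :=
            nint_le_abs _
        _ = |(z.2 - (m.2:ℝ)) - (q:ℝ) * x.2| := abs_sub_comm _ _
        _ ≤ ψ q.natAbs ^ j := by
            have := hb.2.1
            simpa [hc₂] using this
  -- putting everything together
  calc volume (⋃ q ∈ Q, rect x i j φ2 q)
      ≤ volume ((⋃ q ∈ Q, (V q ∩ D)) ∪ (Set.Icc (0 : ℝ × ℝ) 1 \ D)) :=
        measure_mono hcover
    _ ≤ volume (⋃ q ∈ Q, (V q ∩ D)) + volume (Set.Icc (0 : ℝ × ℝ) 1 \ D) :=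
        measure_union_le _ _
    _ = volume (⋃ q ∈ Q, (V q ∩ D)) := by rw [hEnull, add_zero]
    _ ≤ ∑ q ∈ Q, volume (V q ∩ D) := measure_biUnion_finset_le Q _
    _ = ∑ q ∈ Q, 2 * volume (W q) := by
        apply Finset.sum_congr rfl
        intro q _
        rw [hVvol q, hScale q]
    _ = 2 * ∑ q ∈ Q, volume (W q) := by rw [Finset.mul_sum]
    _ = 2 * ∑ q ∈ Q, volume (Wt q ∩ D) := by
        congr 1
        exact Finset.sum_congr rfl fun q _ => (hWtvol q).symm
    _ = 2 * volume (⋃ q ∈ Q, (Wt q ∩ D)) := by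
        congr 1
        exact (measure_biUnion_finset hdisj fun q hq =>
          (hWtm q).inter (measurableSet_Ico.prod measurableSet_Ico)).symm
    _ ≤ 2 * volume (⋃ q ∈ Q, rect x i j ψ q) := by
        apply mul_le_mul_right
        apply measure_mono
        exact Set.iUnion₂_subset hfinal
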